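/- Let λ > 0 and μ, τ ∈ ℝ. For Δ > 0, define the rectangular-grid kernel discretisation limit (R → ∞) of the MSE for the canonical OU∧ process with c = 1: M(Δ) = (4μ²/λ⁴)(1 − [λ²Δ²/(1−e^{-λΔ})²]·[(1+e^{-λΔ})/2])² + τ²[ (2λ²)⁻¹(1 − (2(1−e^{-λΔ})/(λΔ) − 1)·4λ²Δ²e^{-2λΔ}/(1−e^{-2λΔ})²) + (e^{-λΔ}/λ² + Δ/(2λ) − (1−e^{-λΔ/2})·2/(λ³Δ))·2λΔ/(1−e^{-2λΔ}) ]. Then M(Δ) → 0 as Δ → 0⁺, and M(Δ) = O(Δ). -/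

import Mathlib

open Real Filter Asymptotics

private lemma exp_lb' (x : ℝ) : 1 - x ≤ Real.exp (-x) := by
  nlinarith [Real.add_one_le_exp (-x)]

private lemma exp_ub' (x : ℝ) : Real.exp (-x) * (1 + x) ≤ 1 := by
  have h := Real.add_one_le_exp x
  have hp : (0:ℝ) < Real.exp (-x) := Real.exp_pos _
  have h2 : Real.exp (-x) * (1 + x) ≤ Real.exp (-x) * Real.exp x :=
    mul_le_mul_of_nonneg_left (by linarith) hp.le
  rwa [← Real.exp_add, neg_add_cancel, Real.exp_zero] at h2

private lemma compF (x : ℝ) (hx : 0 < x) (hx4 : x ≤ 1/4) :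
    |1 - x ^ 2 / (1 - Real.exp (-x)) ^ 2 * ((1 + Real.exp (-x)) / 2)| ≤ 4 * x := by
  set e := Real.exp (-x) with hed
  have he0 : 0 < e := Real.exp_pos _
  have h1 : 1 - x ≤ e := exp_lb' x
  have h2 : e * (1 + x) ≤ 1 := exp_ub' x
  have hex : e * x > 0 := mul_pos he0 hx
  have hue : 0 < 1 - e := by nlinarith
  have hub : 1 - e ≤ x := by linarith
  have hlb : x - x ^ 2 ≤ 1 - e := by nlinarith
  have hlb0 : 0 ≤ x - x ^ 2 := by nlinarith
  have hD : 0 < (1 - e) ^ 2 := by positivity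
  have hsq : (x - x ^ 2) ^ 2 ≤ (1 - e) ^ 2 := by nlinarith
  have hsq2 : (1 - e) ^ 2 ≤ x ^ 2 := by nlinarith
  have hA1 : 1 ≤ x ^ 2 / (1 - e) ^ 2 := (one_le_div hD).mpr hsq2
  have hA2 : x ^ 2 / (1 - e) ^ 2 ≤ 1 + 4 * x := by
    rw [div_le_iff₀ hD]; nlinarith
  have hB1 : 1 - x / 2 ≤ (1 + e) / 2 := by linarith
  have hB2 : (1 + e) / 2 ≤ 1 := by linarith
  have hml : (1:ℝ) * (1 - x / 2) ≤ x ^ 2 / (1 - e) ^ 2 * ((1 + e) / 2) :=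
    mul_le_mul hA1 hB1 (by linarith) (by linarith)
  have hmu : x ^ 2 / (1 - e) ^ 2 * ((1 + e) / 2) ≤ (1 + 4 * x) * 1 :=
    mul_le_mul hA2 hB2 (by linarith) (by linarith)
  rw [abs_le]
  constructor <;> nlinarith

set_option maxHeartbeats 1000000 in
private lemma compG (x : ℝ) (hx : 0 < x) (hx4 : x ≤ 1/4) :
    |1 - (2 * (1 - Real.exp (-x)) / x - 1) *
        (4 * x ^ 2 * Real.exp (-(2*x)) / (1 - Real.exp (-(2*x))) ^ 2)| ≤ 12 * x := by
  set e := Real.exp (-x) with hed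
  set e2 := Real.exp (-(2*x)) with he2d
  have he0 : 0 < e := Real.exp_pos _
  have he20 : 0 < e2 := Real.exp_pos _
  have h1 : 1 - x ≤ e := exp_lb' x
  have h2 : e * (1 + x) ≤ 1 := exp_ub' x
  have h1' : 1 - 2*x ≤ e2 := exp_lb' (2*x)
  have h2' : e2 * (1 + 2*x) ≤ 1 := exp_ub' (2*x)
  have hex : e * x > 0 := mul_pos he0 hx
  have he2x : e2 * x > 0 := mul_pos he20 hx
  have hue : 0 < 1 - e := by nlinarith
  have hue2 : 0 < 1 - e2 := by nlinarith
  have hub : 1 - e ≤ x := by linarith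
  have hlb : x - x ^ 2 ≤ 1 - e := by nlinarith
  have hub2 : 1 - e2 ≤ 2*x := by linarith
  have hlb2 : 2*x - 4*x^2 ≤ 1 - e2 := by nlinarith
  have hlb20 : 0 ≤ 2*x - 4*x^2 := by nlinarith
  have hD2 : 0 < (1 - e2) ^ 2 := by positivity
  have ha1 : 1 - 2*x ≤ 2 * (1 - e) / x - 1 := by
    rw [le_sub_iff_add_le, le_div_iff₀ hx]; nlinarith
  have ha2 : 2 * (1 - e) / x - 1 ≤ 1 := by
    rw [sub_le_iff_le_add, div_le_iff₀ hx]; nlinarith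
  have hsql : (2*x - 4*x^2) ^ 2 ≤ (1 - e2) ^ 2 := by nlinarith
  have hsqu : (1 - e2) ^ 2 ≤ 4 * x ^ 2 := by nlinarith
  have hb1 : 1 - 2*x ≤ 4 * x ^ 2 * e2 / (1 - e2) ^ 2 := by
    rw [le_div_iff₀ hD2]; nlinarith
  have hq : (0:ℝ) ≤ 1/4 - x := by linarith
  have hpoly : 1 ≤ (1 + 12*x) * (1 - 2*x)^2 * (1 + 2*x) := by
    nlinarith [mul_nonneg hq hx.le, mul_nonneg (mul_nonneg hq hx.le) hx.le,
      mul_nonneg (mul_nonneg (mul_nonneg hq hx.le) hx.le) hx.le]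
  have he2poly : e2 ≤ (1 + 12*x) * (1 - 2*x)^2 := by nlinarith [h2', hpoly]
  have hb2 : 4 * x ^ 2 * e2 / (1 - e2) ^ 2 ≤ 1 + 12 * x := by
    rw [div_le_iff₀ hD2]; nlinarith
  set a := 2 * (1 - e) / x - 1
  set b := 4 * x ^ 2 * e2 / (1 - e2) ^ 2
  have hml : (1 - 2*x) * (1 - 2*x) ≤ a * b :=
    mul_le_mul ha1 hb1 (by linarith) (by linarith)
  have hmu : a * b ≤ 1 * (1 + 12*x) :=
    mul_le_mul ha2 hb2 (by linarith) (by linarith)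
  rw [abs_le]
  constructor <;> nlinarith

private lemma compBr (x : ℝ) (hx : 0 < x) (hx4 : x ≤ 1/4) :
    |Real.exp (-x) + x/2 - (1 - Real.exp (-(x/2))) / (x/2)| ≤ x := by
  set e := Real.exp (-x) with hed
  set eh := Real.exp (-(x/2)) with hehd
  have he0 : 0 < e := Real.exp_pos _
  have heh0 : 0 < eh := Real.exp_pos _
  have h1 : 1 - x ≤ e := exp_lb' x
  have h2 : e * (1 + x) ≤ 1 := exp_ub' x
  have h1h : 1 - x/2 ≤ eh := exp_lb' (x/2)
  have h2h : eh * (1 + x/2) ≤ 1 := exp_ub' (x/2)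
  have heu : e ≤ 1 - x + x^2 := by nlinarith
  have hehu : eh ≤ 1 - x/2 + x^2/4 := by nlinarith
  have hx2 : (0:ℝ) < x/2 := by linarith
  have hw1 : 1 - x/2 ≤ (1 - eh) / (x/2) := by
    rw [le_div_iff₀ hx2]; nlinarith
  have hw2 : (1 - eh) / (x/2) ≤ 1 := by
    rw [div_le_one hx2]; linarith
  rw [abs_le]
  constructor <;> nlinarith

private lemma compFac (x : ℝ) (hx : 0 < x) (hx4 : x ≤ 1/4) :
    0 ≤ 2 * x / (1 - Real.exp (-(2*x))) ∧ 2 * x / (1 - Real.exp (-(2*x))) ≤ 2 := by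
  set e2 := Real.exp (-(2*x)) with he2d
  have he20 : 0 < e2 := Real.exp_pos _
  have h1' : 1 - 2*x ≤ e2 := exp_lb' (2*x)
  have h2' : e2 * (1 + 2*x) ≤ 1 := exp_ub' (2*x)
  have he2x : e2 * x > 0 := mul_pos he20 hx
  have hue2 : 0 < 1 - e2 := by nlinarith
  have hlb2 : 2*x - 4*x^2 ≤ 1 - e2 := by nlinarith
  have hxle : x ≤ 1 - e2 := by nlinarith
  exact ⟨by positivity, by rw [div_le_iff₀ hue2]; linarith⟩

private lemma master (lam μ τ Δ : ℝ) (hlam : 0 < lam) (hΔ : 0 < Δ)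
    (hx4 : lam * Δ ≤ 1/4) :
    |(4 * μ ^ 2 / lam ^ 4) *
        (1 - (lam ^ 2 * Δ ^ 2 / (1 - Real.exp (-(lam * Δ))) ^ 2) *
          ((1 + Real.exp (-(lam * Δ))) / 2)) ^ 2
      + τ ^ 2 *
        ((2 * lam ^ 2)⁻¹ *
          (1 - (2 * (1 - Real.exp (-(lam * Δ))) / (lam * Δ) - 1) *
            (4 * lam ^ 2 * Δ ^ 2 * Real.exp (-(2 * lam * Δ)) /
              (1 - Real.exp (-(2 * lam * Δ))) ^ 2))
        + (Real.exp (-(lam * Δ)) / lam ^ 2 + Δ / (2 * lam)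
            - (1 - Real.exp (-(lam * Δ / 2))) / (lam ^ 2 * (lam * Δ / 2))) *
          (2 * lam * Δ / (1 - Real.exp (-(2 * lam * Δ)))))|
    ≤ ((16 * μ ^ 2 / lam ^ 4 + 8 * τ ^ 2 / lam ^ 2) * lam) * Δ := by
  have hlam0 : lam ≠ 0 := ne_of_gt hlam
  set x := lam * Δ with hxd
  have hx : 0 < x := mul_pos hlam hΔ
  have e1 : lam ^ 2 * Δ ^ 2 = x ^ 2 := by rw [hxd]; ring
  have e2 : 2 * lam * Δ = 2 * x := by rw [hxd]; ring
  have e3 : 4 * lam ^ 2 * Δ ^ 2 = 4 * x ^ 2 := by rw [hxd]; ring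
  have e4 : Δ / (2 * lam) = x / (2 * lam ^ 2) := by rw [hxd]; field_simp
  have e5 : ((16 * μ ^ 2 / lam ^ 4 + 8 * τ ^ 2 / lam ^ 2) * lam) * Δ
      = (16 * μ ^ 2 / lam ^ 4 + 8 * τ ^ 2 / lam ^ 2) * x := by rw [hxd]; ring
  rw [e1, e2, e3, e4, e5]
  -- abbreviations
  set q := x ^ 2 / (1 - Real.exp (-x)) ^ 2 * ((1 + Real.exp (-x)) / 2) with hq
  set g := (2 * (1 - Real.exp (-x)) / x - 1) *
      (4 * x ^ 2 * Real.exp (-(2 * x)) / (1 - Real.exp (-(2 * x))) ^ 2) with hg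
  set F := 2 * x / (1 - Real.exp (-(2 * x))) with hF
  set B := Real.exp (-x) / lam ^ 2 + x / (2 * lam ^ 2)
      - (1 - Real.exp (-(x / 2))) / (lam ^ 2 * (x / 2)) with hB
  have hfb : |1 - q| ≤ 4 * x := compF x hx hx4
  have hgb : |1 - g| ≤ 12 * x := compG x hx hx4
  have hbr : |Real.exp (-x) + x/2 - (1 - Real.exp (-(x/2))) / (x/2)| ≤ x := compBr x hx hx4
  obtain ⟨hF0, hF2⟩ := compFac x hx hx4
  have hBeq : B = (Real.exp (-x) + x/2 - (1 - Real.exp (-(x/2))) / (x/2)) / lam ^ 2 := by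
    rw [hB]; ring
  have hBb : |B| ≤ x / lam ^ 2 := by
    rw [hBeq, abs_div, abs_of_pos (by positivity : (0:ℝ) < lam ^ 2)]
    gcongr
  have h1q : (1 - q) ^ 2 ≤ 16 * x ^ 2 := by
    have h := abs_le.mp hfb
    nlinarith [h.1, h.2]
  have h16 : 16 * x ^ 2 ≤ 4 * x := by nlinarith
  have hT1 : |4 * μ ^ 2 / lam ^ 4 * (1 - q) ^ 2| ≤ 4 * μ ^ 2 / lam ^ 4 * (4 * x) := by
    rw [abs_of_nonneg (by positivity)]
    exact mul_le_mul_of_nonneg_left (le_trans h1q h16) (by positivity)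
  have hT2 : |(2 * lam ^ 2)⁻¹ * (1 - g)| ≤ (2 * lam ^ 2)⁻¹ * (12 * x) := by
    rw [abs_mul, abs_of_pos (by positivity : (0:ℝ) < (2 * lam ^ 2)⁻¹)]
    exact mul_le_mul_of_nonneg_left hgb (by positivity)
  have hT3 : |B * F| ≤ x / lam ^ 2 * 2 := by
    rw [abs_mul]
    exact mul_le_mul hBb (by rwa [abs_of_nonneg hF0]) (abs_nonneg _) (by positivity)
  calc |4 * μ ^ 2 / lam ^ 4 * (1 - q) ^ 2 + τ ^ 2 * ((2 * lam ^ 2)⁻¹ * (1 - g) + B * F)|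
      ≤ |4 * μ ^ 2 / lam ^ 4 * (1 - q) ^ 2| + |τ ^ 2 * ((2 * lam ^ 2)⁻¹ * (1 - g) + B * F)| :=
        abs_add_le _ _
    _ = |4 * μ ^ 2 / lam ^ 4 * (1 - q) ^ 2|
          + τ ^ 2 * |(2 * lam ^ 2)⁻¹ * (1 - g) + B * F| := by
        rw [abs_mul (τ ^ 2), abs_of_nonneg (sq_nonneg τ)]
    _ ≤ |4 * μ ^ 2 / lam ^ 4 * (1 - q) ^ 2|
          + τ ^ 2 * (|(2 * lam ^ 2)⁻¹ * (1 - g)| + |B * F|) :=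
        add_le_add_right (mul_le_mul_of_nonneg_left (abs_add_le _ _) (sq_nonneg τ)) _
    _ ≤ 4 * μ ^ 2 / lam ^ 4 * (4 * x)
          + τ ^ 2 * ((2 * lam ^ 2)⁻¹ * (12 * x) + x / lam ^ 2 * 2) :=
        add_le_add hT1 (mul_le_mul_of_nonneg_left (add_le_add hT2 hT3) (sq_nonneg τ))
    _ = (16 * μ ^ 2 / lam ^ 4 + 8 * τ ^ 2 / lam ^ 2) * x := by ring

/-- The infinite-truncation-range limit `M(Δ)` of the rectangular-grid MSE for the
canonical OU∧ process with c = 1 tends to 0 as the grid size Δ → 0⁺, and `M(Δ) = O(Δ)`. -/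
theorem RG_MSE_limit_tendsto_zero
    (lam μ τ : ℝ) (hlam : 0 < lam)
    (M : ℝ → ℝ)
    (hM : M = fun Δ =>
      (4 * μ ^ 2 / lam ^ 4) *
        (1 - (lam ^ 2 * Δ ^ 2 / (1 - Real.exp (-(lam * Δ))) ^ 2) *
          ((1 + Real.exp (-(lam * Δ))) / 2)) ^ 2
      + τ ^ 2 *
        ((2 * lam ^ 2)⁻¹ *
          (1 - (2 * (1 - Real.exp (-(lam * Δ))) / (lam * Δ) - 1) *
            (4 * lam ^ 2 * Δ ^ 2 * Real.exp (-(2 * lam * Δ)) /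
              (1 - Real.exp (-(2 * lam * Δ))) ^ 2))
        + (Real.exp (-(lam * Δ)) / lam ^ 2 + Δ / (2 * lam)
            - (1 - Real.exp (-(lam * Δ / 2))) / (lam ^ 2 * (lam * Δ / 2))) *
          (2 * lam * Δ / (1 - Real.exp (-(2 * lam * Δ)))))) :
    Tendsto M (nhdsWithin 0 (Set.Ioi 0)) (nhds 0)
    ∧ M =O[nhdsWithin 0 (Set.Ioi 0)] (fun Δ => Δ) := by
  set c := (16 * μ ^ 2 / lam ^ 4 + 8 * τ ^ 2 / lam ^ 2) * lam with hc
  have hc0 : 0 ≤ c := by positivity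
  have hmem : Set.Ioc (0:ℝ) (1 / (4 * lam)) ∈ nhdsWithin (0:ℝ) (Set.Ioi 0) :=
    Ioc_mem_nhdsGT_of_mem (by constructor <;> [rfl; positivity])
  have hev : ∀ᶠ Δ in nhdsWithin (0:ℝ) (Set.Ioi 0), |M Δ| ≤ c * Δ := by
    filter_upwards [hmem] with Δ hΔ
    have hΔ0 : 0 < Δ := hΔ.1
    have hx4 : lam * Δ ≤ 1 / 4 := by
      have h := mul_le_mul_of_nonneg_left hΔ.2 hlam.le
      have : lam * (1 / (4 * lam)) = 1 / 4 := by field_simp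
      linarith
    rw [hM]
    exact master lam μ τ Δ hlam hΔ0 hx4
  constructor
  · refine squeeze_zero_norm' (a := fun Δ => c * Δ) (hev.mono fun Δ h => ?_) ?_
    · simpa [Real.norm_eq_abs] using h
    · have h1 : Tendsto (fun Δ : ℝ => c * Δ) (nhds 0) (nhds (c * 0)) :=
        tendsto_id.const_mul c
      rw [mul_zero] at h1
      exact h1.mono_left nhdsWithin_le_nhds
  · rw [isBigO_iff]
    refine ⟨c, ?_⟩
    filter_upwards [hev, self_mem_nhdsWithin] with Δ h h0
    rw [Real.norm_eq_abs, Real.norm_eq_abs, abs_of_pos (Set.mem_Ioi.mp h0)]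
    exact h
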